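/- Let k be a positive integer and suppose a unit vector φ ∈ ℂ^{2^n} lies in the ℂ-span of k unit vectors s_1,…,s_k that belong to BW_n. Then for every δ₀ > 0 there exist c ∈ ℂ* and ψ ∈ BW_n with ‖cφ − ψ‖ ≤ δ₀·|c| and |c|² ≤ 2k/δ₀². In particular, N_{δ₀}(φ) ≤ 2k/δ₀², where N_δ(φ) = min{‖cφ‖² : c(φ+η) ∈ BW_n for some η with ‖η‖ ≤ δ}. -/

import Mathlib

/-- Generator `|x̃⟩` of the Barnes Wall lattice: the tensor product of `|0⟩`
(where `x i = false`) and `(1/(1+i))(|0⟩+|1⟩)` (where `x i = true`). -/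
noncomputable def bwGen (n : ℕ) (x : Fin n → Bool) :
    EuclideanSpace ℂ (Fin n → Fin 2) :=
  WithLp.toLp 2 (fun y => ∏ i : Fin n,
    (if x i then (1 + Complex.I)⁻¹ else if y i = 0 then 1 else 0))

/-- Membership in the Barnes Wall lattice `BW_n`: the `ℤ[i]`-span of the `bwGen n x`. -/
def memBW (n : ℕ) (v : EuclideanSpace ℂ (Fin n → Fin 2)) : Prop :=
  ∃ a : (Fin n → Bool) → GaussianInt,
    v = ∑ x : Fin n → Bool, (GaussianInt.toComplex (a x)) • bwGen n x

/-- The approximate Barnes Wall norm `N_δ(φ)`. -/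
noncomputable def bwNormApprox (n : ℕ) (δ : ℝ)
    (φ : EuclideanSpace ℂ (Fin n → Fin 2)) : ℝ :=
  sInf {r : ℝ | ∃ (c : ℂ) (η : EuclideanSpace ℂ (Fin n → Fin 2)),
    c ≠ 0 ∧ ‖η‖ ≤ δ ∧ memBW n (c • (φ + η)) ∧ r = ‖c • φ‖ ^ 2}


open scoped ComplexInnerProductSpace in
lemma round_gaussian (b : ℂ) :
    ∃ a : GaussianInt, ‖b - GaussianInt.toComplex a‖ ^ 2 ≤ 1 / 2 := by
  refine ⟨⟨round b.re, round b.im⟩, ?_⟩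
  have h1 : |b.re - round b.re| ≤ 1 / 2 := abs_sub_round b.re
  have h2 : |b.im - round b.im| ≤ 1 / 2 := abs_sub_round b.im
  have : ‖b - GaussianInt.toComplex ⟨round b.re, round b.im⟩‖ ^ 2
      = (b.re - round b.re) ^ 2 + (b.im - round b.im) ^ 2 := by
    rw [Complex.sq_norm]
    simp [Complex.normSq_apply, GaussianInt.toComplex_def', Complex.sub_re, Complex.sub_im,
      Complex.add_re, Complex.add_im, Complex.mul_re, Complex.mul_im]
    ring
  rw [this]
  nlinarith [abs_nonneg (b.re - round b.re), abs_nonneg (b.im - round b.im),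
    sq_abs (b.re - round b.re), sq_abs (b.im - round b.im)]

lemma babai {E : Type*} [NormedAddCommGroup E] [InnerProductSpace ℂ E]
    [FiniteDimensional ℂ E] :
    ∀ (k : ℕ) (s : Fin k → E), (∀ j, ‖s j‖ ≤ 1) →
    ∀ v ∈ Submodule.span ℂ (Set.range s),
    ∃ a : Fin k → GaussianInt,
      ‖v - ∑ j, (GaussianInt.toComplex (a j)) • s j‖ ^ 2 ≤ k / 2 := by
  intro k
  induction k with
  | zero =>
    intro s _ v hv
    refine ⟨0, ?_⟩
    have : Set.range s = ∅ := Set.range_eq_empty s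
    rw [this, Submodule.span_empty, Submodule.mem_bot] at hv
    simp [hv]
  | succ k ih =>
    intro s hs v hv
    obtain ⟨b, hb⟩ := (Submodule.mem_span_range_iff_exists_fun ℂ).mp hv
    set s' : Fin k → E := fun j => s j.castSucc with hs'
    set W : Submodule ℂ E := Submodule.span ℂ (Set.range s') with hW
    set t : E := (W.orthogonalProjection (s (Fin.last k)) : E) with htdef
    set r : E := s (Fin.last k) - t with hrdef
    have hrW : r ∈ Wᗮ := W.sub_starProjection_mem_orthogonal _
    have htW : t ∈ W := (W.orthogonalProjection (s (Fin.last k))).2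
    obtain ⟨aL, haL⟩ := round_gaussian (b (Fin.last k))
    set ε : ℂ := b (Fin.last k) - GaussianInt.toComplex aL with hε
    set u' : E := (∑ j : Fin k, b j.castSucc • s' j) + ε • t with hu'def
    have hu' : u' ∈ W := by
      refine Submodule.add_mem _ (Submodule.sum_mem _ fun j _ => ?_)
        (Submodule.smul_mem _ _ htW)
      exact Submodule.smul_mem _ _ (Submodule.subset_span ⟨j, rfl⟩)
    obtain ⟨a', ha'⟩ := ih s' (fun j => hs _) u' hu'
    set a : Fin (k+1) → GaussianInt := Fin.snoc a' aL with ha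
    refine ⟨a, ?_⟩
    have key : v - ∑ j, (GaussianInt.toComplex (a j)) • s j
        = (u' - ∑ j, (GaussianInt.toComplex (a' j)) • s' j) + ε • r := by
      rw [← hb, Fin.sum_univ_castSucc, Fin.sum_univ_castSucc]
      simp only [ha, Fin.snoc_castSucc, Fin.snoc_last, hu'def, hrdef, hε, hs']
      module
    rw [key]
    have hx : (u' - ∑ j, (GaussianInt.toComplex (a' j)) • s' j) ∈ W :=
      Submodule.sub_mem _ hu' (Submodule.sum_mem _ fun j _ =>
        Submodule.smul_mem _ _ (Submodule.subset_span ⟨j, rfl⟩))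
    have hy : ε • r ∈ Wᗮ := Submodule.smul_mem _ _ hrW
    have hinner : (inner (𝕜 := ℂ)
        (u' - ∑ j, (GaussianInt.toComplex (a' j)) • s' j) (ε • r)) = 0 :=
      Submodule.inner_right_of_mem_orthogonal hx hy
    rw [norm_add_sq (𝕜 := ℂ), hinner]
    have hr1 : ‖r‖ ^ 2 ≤ 1 := by
      have hi : (inner (𝕜 := ℂ) t r) = 0 :=
        Submodule.inner_right_of_mem_orthogonal htW hrW
      have hpyth : ‖s (Fin.last k)‖ ^ 2 = ‖t‖ ^ 2 + ‖r‖ ^ 2 := by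
        have : s (Fin.last k) = t + r := by rw [hrdef]; abel
        rw [this, norm_add_sq (𝕜 := ℂ), hi]; simp
      nlinarith [hs (Fin.last k), norm_nonneg (s (Fin.last k)), sq_nonneg ‖t‖,
        norm_nonneg (t)]
    have hεr : ‖ε • r‖ ^ 2 ≤ 1 / 2 := by
      rw [norm_smul, mul_pow]
      calc ‖ε‖ ^ 2 * ‖r‖ ^ 2 ≤ (1 / 2) * 1 := by
            apply mul_le_mul haL hr1 (sq_nonneg _) (by norm_num)
        _ = 1 / 2 := by ring
    simp only [map_zero, mul_zero, add_zero]
    push_cast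
    linarith

lemma memBW_sum {n k : ℕ} (s : Fin k → EuclideanSpace ℂ (Fin n → Fin 2))
    (h : ∀ j, memBW n (s j)) (a : Fin k → GaussianInt) :
    memBW n (∑ j, (GaussianInt.toComplex (a j)) • s j) := by
  choose c hc using h
  refine ⟨fun x => ∑ j, a j * c j x, ?_⟩
  have : ∀ x : Fin n → Bool,
      (GaussianInt.toComplex (∑ j, a j * c j x)) • bwGen n x
      = ∑ j, (GaussianInt.toComplex (a j)) •
          ((GaussianInt.toComplex (c j x)) • bwGen n x) := by
    intro x
    rw [map_sum, Finset.sum_smul]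
    refine Finset.sum_congr rfl fun j _ => ?_
    rw [map_mul, mul_smul]
  rw [Finset.sum_congr rfl fun x _ => this x, Finset.sum_comm]
  refine Finset.sum_congr rfl fun j _ => ?_
  rw [← Finset.smul_sum, ← hc j]

theorem stmt_15 (n k : ℕ) (hk : 0 < k)
    (s : Fin k → EuclideanSpace ℂ (Fin n → Fin 2))
    (hs : ∀ j, ‖s j‖ = 1) (hsBW : ∀ j, memBW n (s j))
    (φ : EuclideanSpace ℂ (Fin n → Fin 2)) (hφ : ‖φ‖ = 1)
    (hspan : φ ∈ Submodule.span ℂ (Set.range s)) :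
    ∀ δ₀ : ℝ, 0 < δ₀ →
      (∃ (c : ℂ) (ψ : EuclideanSpace ℂ (Fin n → Fin 2)), c ≠ 0 ∧ memBW n ψ ∧
        ‖c • φ - ψ‖ ≤ δ₀ * ‖c‖ ∧ ‖c‖ ^ 2 ≤ 2 * k / δ₀ ^ 2) ∧
      bwNormApprox n δ₀ φ ≤ 2 * k / δ₀ ^ 2 := by
  intro δ₀ hδ₀
  have hk2 : (0:ℝ) < 2 * k := by positivity
  set cr : ℝ := Real.sqrt (2 * k) / δ₀ with hcr
  have hcrpos : 0 < cr := div_pos (Real.sqrt_pos.mpr hk2) hδ₀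
  set c : ℂ := (cr : ℂ) with hc
  have hc0 : c ≠ 0 := by
    simp only [hc, ne_eq, Complex.ofReal_eq_zero]
    exact ne_of_gt hcrpos
  have hnc : ‖c‖ = cr := by
    rw [hc, Complex.norm_real, Real.norm_eq_abs, abs_of_pos hcrpos]
  have hncsq : ‖c‖ ^ 2 = 2 * k / δ₀ ^ 2 := by
    rw [hnc, hcr, div_pow, Real.sq_sqrt hk2.le]
  obtain ⟨a, ha⟩ := babai k s (fun j => le_of_eq (hs j)) (c • φ)
    (Submodule.smul_mem _ _ hspan)
  set ψ := ∑ j, (GaussianInt.toComplex (a j)) • s j with hψ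
  have hψBW : memBW n ψ := memBW_sum s hsBW a
  have hdist : ‖c • φ - ψ‖ ≤ δ₀ * ‖c‖ := by
    have h1 : δ₀ * ‖c‖ = Real.sqrt (2 * k) := by
      rw [hnc, hcr]; field_simp
    rw [h1]
    have h2 : ‖c • φ - ψ‖ ^ 2 ≤ 2 * k := by
      calc ‖c • φ - ψ‖ ^ 2 ≤ k / 2 := ha
        _ ≤ 2 * k := by
            have : (0:ℝ) ≤ k := Nat.cast_nonneg k
            linarith
    exact Real.le_sqrt_of_sq_le h2
  refine ⟨⟨c, ψ, hc0, hψBW, hdist, le_of_eq hncsq⟩, ?_⟩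
  have hr : (2 * k / δ₀ ^ 2 : ℝ) ∈ {r : ℝ | ∃ (c : ℂ)
      (η : EuclideanSpace ℂ (Fin n → Fin 2)),
      c ≠ 0 ∧ ‖η‖ ≤ δ₀ ∧ memBW n (c • (φ + η)) ∧ r = ‖c • φ‖ ^ 2} := by
    refine ⟨c, c⁻¹ • ψ - φ, hc0, ?_, ?_, ?_⟩
    · have : c⁻¹ • ψ - φ = c⁻¹ • (ψ - c • φ) := by
        rw [smul_sub, inv_smul_smul₀ hc0]
      rw [this, norm_smul, norm_inv]
      rw [← norm_neg (ψ - c • φ), neg_sub]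
      calc ‖c‖⁻¹ * ‖c • φ - ψ‖ ≤ ‖c‖⁻¹ * (δ₀ * ‖c‖) := by
            apply mul_le_mul_of_nonneg_left hdist (by positivity)
        _ = δ₀ := by
            rw [hnc]; field_simp
    · have : c • (φ + (c⁻¹ • ψ - φ)) = ψ := by
        rw [add_sub_cancel, smul_inv_smul₀ hc0]
      rw [this]; exact hψBW
    · rw [norm_smul, hφ, mul_one, hncsq]
  unfold bwNormApprox
  refine csInf_le ⟨0, fun r hrr => ?_⟩ hr
  obtain ⟨c', η, _, _, _, hre⟩ := hrr
  rw [hre]; positivity
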